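/- For any prime p > 3, C(2p−2, p−1) ≡ −p − 2p^2 (mod p^3). -/

import Mathlib

open Finset

section Expand

variable {R : Type*} [CommRing R]

private def eN (f : ℕ → R) (n : ℕ) : R := ∏ i ∈ range n, f i
private def eA (f : ℕ → R) (n : ℕ) : R := ∑ j ∈ range n, ∏ i ∈ (range n).erase j, f i
private def eB (f : ℕ → R) (n : ℕ) : R :=
  ∑ j ∈ range n, ∑ k ∈ range j, ∏ i ∈ ((range n).erase j).erase k, f i

private lemma eA_succ (f : ℕ → R) (n : ℕ) : eA f (n+1) = eN f n + f n * eA f n := by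
  unfold eA eN
  rw [sum_range_succ, range_add_one, erase_insert (by simp), add_comm]
  congr 1
  rw [mul_sum]
  refine sum_congr rfl fun j hj => ?_
  have hj' : j < n := mem_range.mp hj
  rw [erase_insert_of_ne (by omega), prod_insert (by simp)]

private lemma eB_succ (f : ℕ → R) (n : ℕ) : eB f (n+1) = eA f n + f n * eB f n := by
  unfold eB eA
  rw [sum_range_succ, range_add_one, add_comm]
  congr 1
  · refine sum_congr rfl fun k hk => ?_
    have hk' : k < n := mem_range.mp hk
    rw [erase_insert (by simp)]
  · rw [mul_sum]
    refine sum_congr rfl fun j hj => ?_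
    have hj' : j < n := mem_range.mp hj
    rw [mul_sum]
    refine sum_congr rfl fun k hk => ?_
    have hk' : k < j := mem_range.mp hk
    rw [erase_insert_of_ne (by omega), erase_insert_of_ne (by omega),
      prod_insert (by simp)]

private lemma prod_add_expand (x : R) (hx : x^3 = 0) (f : ℕ → R) (n : ℕ) :
    ∏ j ∈ range n, (x + f j) = eN f n + x * eA f n + x^2 * eB f n := by
  induction n with
  | zero => simp [eN, eA, eB]
  | succ n ih =>
    rw [prod_range_succ, ih, eA_succ, eB_succ,
      show eN f (n+1) = eN f n * f n from prod_range_succ f n]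
    linear_combination eB f n * hx

private lemma sq_sum_expand (b : ℕ → R) (n : ℕ) :
    (∑ j ∈ range n, b j)^2
      = ∑ j ∈ range n, (b j)^2 + 2 * ∑ j ∈ range n, ∑ k ∈ range j, b j * b k := by
  induction n with
  | zero => simp
  | succ n ih =>
    rw [sum_range_succ, sum_range_succ (f := fun j => (b j)^2),
      sum_range_succ (f := fun j => ∑ k ∈ range j, b j * b k), ← mul_sum]
    linear_combination ih

end Expand

private def WN (n : ℕ) : ℕ := ∏ i ∈ range n, (i+1)
private def WA (n : ℕ) : ℕ := ∑ j ∈ range n, ∏ i ∈ (range n).erase j, (i+1)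
private def WB (n : ℕ) : ℕ :=
  ∑ j ∈ range n, ∑ k ∈ range j, ∏ i ∈ ((range n).erase j).erase k, (i+1)

private lemma sum_inv_pow (p : ℕ) (hp : p.Prime) (k : ℕ) (hk0 : 0 < k)
    (hk : k < p - 1) :
    ∑ j ∈ range (p-1), (((j+1 : ℕ) : ZMod p)⁻¹)^k = 0 := by
  haveI := Fact.mk hp
  have h1 := sum_range_succ' (fun j => (((j : ℕ) : ZMod p)⁻¹)^k) (p-1)
  rw [show p-1+1 = p from by omega] at h1
  simp only [Nat.cast_zero, inv_zero, zero_pow hk0.ne', add_zero] at h1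
  have h2 : ∑ j ∈ range p, (((j : ℕ) : ZMod p)⁻¹)^k = ∑ x : ZMod p, (x⁻¹)^k := by
    refine Finset.sum_nbij' (i := fun j => ((j : ℕ) : ZMod p)) (j := fun x => x.val)
      (fun a _ => mem_univ _) (fun x _ => mem_range.mpr (ZMod.val_lt x))
      (fun a ha => ZMod.val_cast_of_lt (mem_range.mp ha))
      (fun x _ => ZMod.natCast_rightInverse x) (fun a _ => rfl)
  have h3 : ∑ x : ZMod p, (x⁻¹)^k = ∑ x : ZMod p, x^k :=
    Fintype.sum_bijective (fun x : ZMod p => x⁻¹)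
      (Function.Involutive.bijective fun x => inv_inv x) _ _ (fun x => rfl)
  have h4 : ∑ x : ZMod p, x^k = 0 :=
    FiniteField.sum_pow_lt_card_sub_one (ZMod p) k (by rw [ZMod.card]; omega)
  rw [← h1, h2, h3, h4]

private lemma cast_ne_zero_of_lt {p j : ℕ} (h0 : 0 < j) (h : j < p) :
    ((j : ℕ) : ZMod p) ≠ 0 := by
  rw [Ne, ZMod.natCast_eq_zero_iff]
  intro hdvd
  exact absurd (Nat.le_of_dvd h0 hdvd) (by omega)

private lemma WA_dvd (p : ℕ) (hp : p.Prime) (hp3 : 3 < p) : p^2 ∣ WA (p-1) := by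
  haveI := Fact.mk hp
  have podd : p % 2 = 1 := Nat.odd_iff.mp (hp.odd_of_ne_two (by omega))
  set Q : ℕ → ℕ := fun j => ∏ i ∈ ((range (p-1)).erase j).erase (p-2-j), (i+1) with hQdef
  have hMj : ∀ j ∈ range (p-1),
      ∏ i ∈ (range (p-1)).erase j, (i+1) = (p-1-j) * Q j := by
    intro j hj
    have hj' : j < p - 1 := mem_range.mp hj
    have hmem : p-2-j ∈ (range (p-1)).erase j := by
      rw [mem_erase, mem_range]; omega
    rw [← Finset.mul_prod_erase _ _ hmem, show p-2-j+1 = p-1-j from by omega]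
  have hMj' : ∀ j ∈ range (p-1),
      ∏ i ∈ (range (p-1)).erase (p-2-j), (i+1) = (j+1) * Q j := by
    intro j hj
    have hj' : j < p - 1 := mem_range.mp hj
    have hmem : j ∈ (range (p-1)).erase (p-2-j) := by
      rw [mem_erase, mem_range]; omega
    rw [← Finset.mul_prod_erase _ _ hmem, hQdef]
    rw [Finset.erase_right_comm]
  have h2A : 2 * WA (p-1) = p * ∑ j ∈ range (p-1), Q j := by
    rw [two_mul, WA]
    nth_rewrite 2 [← sum_range_reflect]
    rw [← sum_add_distrib, mul_sum]
    refine sum_congr rfl fun j hj => ?_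
    have hj' : j < p - 1 := mem_range.mp hj
    rw [show p-1-1-j = p-2-j from by omega, hMj j hj, hMj' j hj, ← Nat.add_mul,
      show p-1-j+(j+1) = p from by omega]
  have hQsum : p ∣ ∑ j ∈ range (p-1), Q j := by
    rw [← ZMod.natCast_eq_zero_iff, Nat.cast_sum]
    have hterm : ∀ j ∈ range (p-1),
        ((Q j : ℕ) : ZMod p) = -(WN (p-1) : ZMod p) * (((j+1 : ℕ) : ZMod p)⁻¹)^2 := by
      intro j hj
      have hj' : j < p - 1 := mem_range.mp hj
      have hNat : (j+1) * ((p-1-j) * Q j) = WN (p-1) := by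
        rw [← hMj j hj, WN]; exact Finset.mul_prod_erase _ (fun i => i+1) hj
      have hcast : ((p-1-j : ℕ) : ZMod p) = -(((j+1 : ℕ) : ZMod p)) := by
        rw [show p-1-j = p - (j+1) from by omega, Nat.cast_sub (by omega : j+1 ≤ p)]
        simp
      have ha : (((j+1 : ℕ)) : ZMod p) ≠ 0 := cast_ne_zero_of_lt (by omega) (by omega)
      have hZ : (((j+1:ℕ)) : ZMod p) * (((p-1-j : ℕ) : ZMod p) * (Q j : ZMod p))
          = (WN (p-1) : ZMod p) := by
        rw [← Nat.cast_mul, ← Nat.cast_mul, hNat]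
      rw [hcast] at hZ
      set a := (((j+1:ℕ)) : ZMod p) with hadef
      refine mul_left_cancel₀ (pow_ne_zero 2 ha) ?_
      rw [show a^2 * (-(WN (p-1) : ZMod p) * (a⁻¹)^2)
          = -(WN (p-1) : ZMod p) * (a * a⁻¹)^2 from by ring, mul_inv_cancel₀ ha]
      linear_combination -hZ
    rw [sum_congr rfl hterm, ← mul_sum, sum_inv_pow p hp 2 (by omega) (by omega), mul_zero]
  obtain ⟨t, ht⟩ := hQsum
  have h22 : 2 * WA (p-1) = p^2 * t := by rw [h2A, ht]; ring
  refine (Nat.Coprime.dvd_of_dvd_mul_left ?_ ⟨t, h22⟩)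
  exact ((Nat.coprime_two_left.mpr (hp.odd_of_ne_two (by omega))).pow_right 2).symm

private lemma WB_dvd (p : ℕ) (hp : p.Prime) (hp3 : 3 < p) : p ∣ WB (p-1) := by
  haveI := Fact.mk hp
  rw [← ZMod.natCast_eq_zero_iff, WB, Nat.cast_sum]
  have hterm : ∀ j ∈ range (p-1),
      ((∑ k ∈ range j, ∏ i ∈ ((range (p-1)).erase j).erase k, (i+1) : ℕ) : ZMod p)
      = (WN (p-1) : ZMod p) *
        ∑ k ∈ range j, (((j+1:ℕ):ZMod p)⁻¹ * ((k+1:ℕ):ZMod p)⁻¹) := by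
    intro j hj
    have hj' : j < p - 1 := mem_range.mp hj
    rw [Nat.cast_sum, mul_sum]
    refine sum_congr rfl fun k hk => ?_
    have hk' : k < j := mem_range.mp hk
    have hkmem : k ∈ (range (p-1)).erase j := by rw [mem_erase, mem_range]; omega
    have s1 : (k+1) * ∏ i ∈ ((range (p-1)).erase j).erase k, (i+1)
        = ∏ i ∈ (range (p-1)).erase j, (i+1) :=
      Finset.mul_prod_erase _ (fun i => i+1) hkmem
    have hNat : (j+1) * ((k+1) *
        ∏ i ∈ ((range (p-1)).erase j).erase k, (i+1)) = WN (p-1) := by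
      rw [s1, WN]; exact Finset.mul_prod_erase _ (fun i => i+1) hj
    have haj : (((j+1 : ℕ)) : ZMod p) ≠ 0 := cast_ne_zero_of_lt (by omega) (by omega)
    have hak : (((k+1 : ℕ)) : ZMod p) ≠ 0 := cast_ne_zero_of_lt (by omega) (by omega)
    have hZ : (((j+1:ℕ)) : ZMod p) * ((((k+1:ℕ)) : ZMod p) *
        ((∏ i ∈ ((range (p-1)).erase j).erase k, (i+1) : ℕ) : ZMod p))
        = (WN (p-1) : ZMod p) := by
      rw [← Nat.cast_mul, ← Nat.cast_mul, hNat]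
    set aj := (((j+1:ℕ)) : ZMod p)
    set ak := (((k+1:ℕ)) : ZMod p)
    refine mul_left_cancel₀ (mul_ne_zero haj hak) ?_
    rw [show aj * ak * ((WN (p-1) : ZMod p) * (aj⁻¹ * ak⁻¹))
        = (WN (p-1) : ZMod p) * ((aj * aj⁻¹) * (ak * ak⁻¹)) from by ring,
      mul_inv_cancel₀ haj, mul_inv_cancel₀ hak]
    linear_combination hZ
  rw [sum_congr rfl hterm, ← mul_sum]
  have h2ne : (2 : ZMod p) ≠ 0 := by
    have := cast_ne_zero_of_lt (p := p) (j := 2) (by omega) (by omega)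
    simpa using this
  have e1 : ∑ j ∈ range (p-1), ((j+1:ℕ):ZMod p)⁻¹ = 0 := by
    have := sum_inv_pow p hp 1 (by omega) (by omega)
    simpa using this
  have e2 : ∑ j ∈ range (p-1), (((j+1:ℕ):ZMod p)⁻¹)^2 = 0 :=
    sum_inv_pow p hp 2 (by omega) (by omega)
  have hsq := sq_sum_expand (fun j => ((j+1:ℕ):ZMod p)⁻¹) (p-1)
  rw [e1, e2] at hsq
  have hss : ∑ j ∈ range (p-1), ∑ k ∈ range j,
      ((j+1:ℕ):ZMod p)⁻¹ * ((k+1:ℕ):ZMod p)⁻¹ = 0 := by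
    have h20 : (2 : ZMod p) * ∑ j ∈ range (p-1), ∑ k ∈ range j,
        ((j+1:ℕ):ZMod p)⁻¹ * ((k+1:ℕ):ZMod p)⁻¹ = 0 := by linear_combination -hsq
    exact (mul_eq_zero.mp h20).resolve_left h2ne
  rw [hss, mul_zero]

theorem centralBinom_sub_one_mod_p_cubed (p : ℕ) (hp : p.Prime) (hp3 : 3 < p) :
    (((2 * p - 2).choose (p - 1) : ℤ)) ≡ -(p : ℤ) - 2 * (p : ℤ) ^ 2 [ZMOD (p : ℤ) ^ 3] := by
  haveI := Fact.mk hp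
  have hcube : ((p : ZMod (p^3)))^3 = 0 := by
    rw [← Nat.cast_pow, ZMod.natCast_self]
  -- the ℕ identity
  have hnat : (2*p-1) * ((2*p-2).choose (p-1)) * WN (p-1)
      = p * ∏ i ∈ range (p-1), (p+1+i) := by
    have e1 := Nat.add_one_mul_choose_eq (2*p-2) (p-1)
    rw [show 2*p-2+1 = 2*p-1 from by omega, show p-1+1 = p from by omega] at e1
    have e2 : (2*p-1).choose p = (2*p-1).choose (p-1) := by
      rw [← Nat.choose_symm (by omega : p ≤ 2*p-1), show 2*p-1-p = p-1 from by omega]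
    have e3 : (2*p-1).choose (p-1) * (p-1).factorial = (2*p-1).descFactorial (p-1) := by
      rw [Nat.descFactorial_eq_factorial_mul_choose]; ring
    have e4 : (2*p-1).descFactorial (p-1) = ∏ i ∈ range (p-1), (2*p-1-i) :=
      Nat.descFactorial_eq_prod_range _ _
    have e5 : ∏ i ∈ range (p-1), (2*p-1-i) = ∏ i ∈ range (p-1), (p+1+i) := by
      refine Eq.trans ?_ (prod_range_reflect (fun j => p+1+j) (p-1))
      refine prod_congr rfl fun i hi => ?_
      have := mem_range.mp hi
      omega
    have e6 : WN (p-1) = (p-1).factorial := prod_range_add_one_eq_factorial _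
    calc (2*p-1) * ((2*p-2).choose (p-1)) * WN (p-1)
        = ((2*p-1).choose p * p) * (p-1).factorial := by rw [e6, e1]
      _ = p * ((2*p-1).choose (p-1) * (p-1).factorial) := by rw [e2]; ring
      _ = p * ∏ i ∈ range (p-1), (p+1+i) := by rw [e3, e4, e5]
  obtain ⟨a, ha⟩ := WA_dvd p hp hp3
  obtain ⟨b, hb⟩ := WB_dvd p hp hp3
  have hexp := prod_add_expand ((p : ZMod (p^3))) hcube
    (fun i => ((i+1:ℕ) : ZMod (p^3))) (p-1)
  have hNc : eN (fun i => ((i+1:ℕ) : ZMod (p^3))) (p-1) = ((WN (p-1) : ℕ) : ZMod (p^3)) := by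
    unfold eN WN; rw [Nat.cast_prod]
  have hAc : eA (fun i => ((i+1:ℕ) : ZMod (p^3))) (p-1) = ((WA (p-1) : ℕ) : ZMod (p^3)) := by
    unfold eA WA; rw [Nat.cast_sum]
    exact sum_congr rfl fun j _ => (Nat.cast_prod _ _).symm
  have hBc : eB (fun i => ((i+1:ℕ) : ZMod (p^3))) (p-1) = ((WB (p-1) : ℕ) : ZMod (p^3)) := by
    unfold eB WB; rw [Nat.cast_sum]
    refine sum_congr rfl fun j _ => ?_
    rw [Nat.cast_sum]
    exact sum_congr rfl fun k _ => (Nat.cast_prod _ _).symm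
  rw [hNc, hAc, hBc] at hexp
  have hzeroA : (p : ZMod (p^3)) * ((WA (p-1) : ℕ) : ZMod (p^3)) = 0 := by
    rw [ha, Nat.cast_mul, Nat.cast_pow,
      show (p:ZMod (p^3)) * (((p:ZMod (p^3)))^2 * ((a:ℕ):ZMod (p^3)))
        = ((p:ZMod (p^3)))^3 * ((a:ℕ):ZMod (p^3)) from by ring, hcube, zero_mul]
  have hzeroB : ((p : ZMod (p^3)))^2 * ((WB (p-1) : ℕ) : ZMod (p^3)) = 0 := by
    rw [hb, Nat.cast_mul,
      show ((p:ZMod (p^3)))^2 * ((p:ZMod (p^3)) * ((b:ℕ):ZMod (p^3)))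
        = ((p:ZMod (p^3)))^3 * ((b:ℕ):ZMod (p^3)) from by ring, hcube, zero_mul]
  rw [hzeroA, hzeroB, add_zero, add_zero] at hexp
  -- cast the ℕ identity
  have hR := congrArg (Nat.cast : ℕ → ZMod (p^3)) hnat
  rw [Nat.cast_mul, Nat.cast_mul, Nat.cast_mul, Nat.cast_prod] at hR
  have hprodc : ∏ i ∈ range (p-1), ((p+1+i : ℕ) : ZMod (p^3))
      = ∏ i ∈ range (p-1), ((p : ZMod (p^3)) + ((i+1:ℕ) : ZMod (p^3))) := by
    refine prod_congr rfl fun i _ => ?_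
    push_cast; ring
  rw [hprodc, hexp] at hR
  -- units and cancellation
  have hNunit : IsUnit ((WN (p-1) : ℕ) : ZMod (p^3)) := by
    rw [ZMod.isUnit_iff_coprime]
    refine Nat.Coprime.pow_right 3 ?_
    have : WN (p-1) = (p-1).factorial := prod_range_add_one_eq_factorial _
    rw [this]
    refine ((hp.coprime_iff_not_dvd).mpr ?_).symm
    intro hdvd
    have := (Nat.Prime.dvd_factorial hp).mp hdvd
    omega
  have h1 : ((2*p-1 : ℕ) : ZMod (p^3)) * (((2*p-2).choose (p-1) : ℕ) : ZMod (p^3))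
      = (p : ZMod (p^3)) := hNunit.mul_right_cancel hR
  have hUnit2 : IsUnit ((2*p-1 : ℕ) : ZMod (p^3)) := by
    rw [ZMod.isUnit_iff_coprime]
    refine Nat.Coprime.pow_right 3 ?_
    refine ((hp.coprime_iff_not_dvd).mpr ?_).symm
    intro hdvd
    have h2p : p ∣ 2*p := ⟨2, by ring⟩
    have := Nat.dvd_sub h2p hdvd
    rw [show 2*p - (2*p-1) = 1 from by omega] at this
    have := Nat.le_of_dvd (by omega) this
    omega
  have hmod : ((p:ℤ)^3) = ((p^3 : ℕ) : ℤ) := by push_cast; ring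
  rw [hmod, ← ZMod.intCast_eq_intCast_iff]
  push_cast
  have h2 : ((2*p-1 : ℕ) : ZMod (p^3)) * (-(p:ZMod (p^3)) - 2*((p:ZMod (p^3)))^2)
      = (p : ZMod (p^3)) := by
    rw [Nat.cast_sub (by omega : 1 ≤ 2*p)]
    push_cast
    linear_combination (-4 : ZMod (p^3)) * hcube
  exact hUnit2.mul_left_cancel (h1.trans h2.symm)
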